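/- Let n ≥ 3, let d = 2n and let s₂ = (2, n−3) ∈ ℤ². Then for every i ∈ ℤ/2nℤ, the Kashiwara operator ẽ_i (defined with respect to d and the charge s₂) annihilates the bipartition ∅.2^{n−3}: ẽ_i(∅.2^{n−3}) = 0. -/

import Mathlib

open scoped Classical

noncomputable section

/-- A partition: an antitone, eventually zero sequence of natural numbers.
`parts k` is the `(k+1)`-st part `λ_{k+1}`. -/
structure PartitionSeq where
  parts : ℕ → ℕ
  antitone' : Antitone parts
  exists_zero : ∃ N, parts N = 0

namespace PartitionSeq

lemma sorted_getD_antitone {l : List ℕ} (h : l.Pairwise (· ≥ ·)) :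
    Antitone (fun k => l.getD k 0) := by
  intro i j hij
  simp only
  rcases lt_or_ge j l.length with hj | hj
  · have hi : i < l.length := lt_of_le_of_lt hij hj
    rw [List.getD_eq_getElem l 0 hj, List.getD_eq_getElem l 0 hi]
    rcases eq_or_lt_of_le hij with rfl | hlt
    · exact le_rfl
    · exact List.pairwise_iff_getElem.mp h i j hi hj hlt
  · rw [List.getD_eq_default l 0 hj]
    exact Nat.zero_le _

/-- The partition whose multiset of (nonzero) parts is the multiset of nonzero
elements of `m`. -/
def ofMul (m : Multiset ℕ) : PartitionSeq where
  parts := fun k => ((m.sort (· ≤ ·)).reverse).getD k 0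
  antitone' := by
    apply sorted_getD_antitone
    rw [List.pairwise_reverse]
    exact Multiset.pairwise_sort (r := (· ≤ ·)) (s := m)
  exists_zero := ⟨((m.sort (· ≤ ·)).reverse).length, List.getD_eq_default _ _ le_rfl⟩

/-- The size `|λ|` of a partition: the sum of its parts. -/
def size (p : PartitionSeq) : ℕ := ∑ i ∈ Finset.range (Nat.find p.exists_zero), p.parts i

lemma finite_gt (p : PartitionSeq) (k : ℕ) : {i : ℕ | k < p.parts i}.Finite := by
  obtain ⟨N, hN⟩ := p.exists_zero
  apply (Set.finite_Iio N).subset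
  intro i hi
  simp only [Set.mem_setOf_eq] at hi
  by_contra hc
  simp only [Set.mem_Iio, not_lt] at hc
  have := p.antitone' hc
  omega

/-- The conjugate (transpose) partition. -/
def conj (p : PartitionSeq) : PartitionSeq where
  parts := fun k => {i : ℕ | k < p.parts i}.ncard
  antitone' := fun a b hab =>
    Set.ncard_le_ncard (fun i hi => lt_of_le_of_lt hab hi) (p.finite_gt a)
  exists_zero := by
    refine ⟨p.parts 0, ?_⟩
    have h : {i : ℕ | p.parts 0 < p.parts i} = ∅ := by
      ext i
      simp only [Set.mem_setOf_eq, Set.mem_empty_iff_false, iff_false, not_lt]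
      exact p.antitone' (Nat.zero_le i)
    show {i : ℕ | p.parts 0 < p.parts i}.ncard = 0
    rw [h, Set.ncard_empty]

/-- The 180°-rotation of the complement of `p` inside the rectangle with
`rows` rows of length `c`: the partition `(c - p_rows, c - p_{rows-1}, …, c - p₁)`. -/
def rotCompl (c rows : ℕ) (p : PartitionSeq) : PartitionSeq where
  parts := fun k => if k < rows then c - p.parts (rows - 1 - k) else 0
  antitone' := by
    intro a b hab
    by_cases hb : b < rows
    · have ha : a < rows := lt_of_le_of_lt hab hb
      simp only [if_pos hb, if_pos ha]
      exact Nat.sub_le_sub_left (p.antitone' (by omega)) c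
    · simp only [if_neg hb]
      exact Nat.zero_le _
  exists_zero := ⟨rows, by simp⟩

end PartitionSeq

/-- A bipartition: a pair of partitions. -/
abbrev Bipartition := PartitionSeq × PartitionSeq

/-- The size of a bipartition. -/
def Bipartition.size (l : Bipartition) : ℕ := l.1.size + l.2.size

/-- The bipartition whose components have parts the multisets `a` and `b`. -/
def bip (a b : Multiset ℕ) : Bipartition := (PartitionSeq.ofMul a, PartitionSeq.ofMul b)

/-- The multiset of parts of the partition `a 1^b` (one part `a`, then `b` parts `1`). -/
def hook (a b : ℕ) : Multiset ℕ := a ::ₘ Multiset.replicate b 1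

/-- The charged β-set of a partition, as a sequence:
`betaSet p s i = λ_{i+1} + s - (i+1) + 1`. -/
def betaSet (p : PartitionSeq) (s : ℤ) (i : ℕ) : ℤ := (p.parts i : ℤ) + s - i

/-- The charged symbol of a bipartition with charge `σ`, as a pair of subsets of `ℤ`. -/
def symbolOf (l : Bipartition) (σ : ℤ × ℤ) : Set ℤ × Set ℤ :=
  (Set.range (betaSet l.1 σ.1), Set.range (betaSet l.2 σ.2))

/-- The charge `σ_t`. -/
def sigmaT (t : ℕ) : ℤ × ℤ :=
  if Even t then ((t : ℤ), -1 - (t : ℤ)) else (-1 - (t : ℤ), (t : ℤ))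

/-- The trivial symbol `({0,-1,-2,…},{-1,-2,-3,…})`, the symbol of the empty
bipartition with charge `σ₀ = (0,-1)`. -/
def trivialSymbol : Set ℤ × Set ℤ := ({z : ℤ | z ≤ 0}, {z : ℤ | z ≤ -1})

/-- Removing one `n`-co-hook from the symbol `Λ`, yielding `Λ'`: remove `x+n` from one
row, adjoin `x` to the other row, and exchange the two rows. -/
def CohookStep (n : ℕ) (Λ Λ' : Set ℤ × Set ℤ) : Prop :=
  (∃ x : ℤ, x + n ∈ Λ.1 ∧ x ∉ Λ.2 ∧ Λ' = (Λ.2 ∪ {x}, Λ.1 \ {x + n})) ∨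
  (∃ x : ℤ, x + n ∈ Λ.2 ∧ x ∉ Λ.1 ∧ Λ' = (Λ.2 \ {x + n}, Λ.1 ∪ {x}))

/-- `C` is the `n`-co-core of `Λ`: it is obtained from `Λ` by recursively removing
`n`-co-hooks, and no further `n`-co-hook can be removed. -/
def IsCocore (n : ℕ) (Λ C : Set ℤ × Set ℤ) : Prop :=
  Relation.ReflTransGen (CohookStep n) Λ C ∧ ∀ C', ¬ CohookStep n C C'

/-- Number of entries of the charged β-set of `p` that are `≥ α` (with multiplicity). -/
def betaCountGE (p : PartitionSeq) (s α : ℤ) : ℕ := Nat.card {i : ℕ // α ≤ betaSet p s i}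

/-- Number of entries `≥ α`, with multiplicity, of the multiset union of the two rows
of the symbol of `l` with charge `σ`. -/
def symCountGE (l : Bipartition) (σ : ℤ × ℤ) (α : ℤ) : ℕ :=
  betaCountGE l.1 σ.1 α + betaCountGE l.2 σ.2 α

/-- The composition `ϖ_Λ` of the symbol of `l` with charge `σ`: `comp l σ k` is the
`(k+1)`-st largest entry (with multiplicity) of the multiset union of the two rows. -/
def comp (l : Bipartition) (σ : ℤ × ℤ) (k : ℕ) : ℤ :=
  sSup {z : ℤ | k + 1 ≤ symCountGE l σ z}

/-- All partial sums of the composition of the symbol `(l,σ)` are bounded by those of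
`(m,τ)`. -/
def DomLE (l : Bipartition) (σ : ℤ × ℤ) (m : Bipartition) (τ : ℤ × ℤ) : Prop :=
  ∀ j : ℕ, ∑ k ∈ Finset.range j, comp l σ k ≤ ∑ k ∈ Finset.range j, comp m τ k

/-- Strict dominance `Λ ⊲ Λ'` of symbols: the compositions differ and all partial sums
of the first are bounded by those of the second. -/
def DomLT (l : Bipartition) (σ : ℤ × ℤ) (m : Bipartition) (τ : ℤ × ℤ) : Prop :=
  comp l σ ≠ comp m τ ∧ DomLE l σ m τ

/-- A box `(x, y, j)` (0-indexed row `x`, 0-indexed column `y`, component `j`: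
`j = 0` is the first component, `j = 1` the second). -/
abbrev Box := ℕ × ℕ × Fin 2

/-- The component of a bipartition selected by `j : Fin 2`. -/
def Bipartition.partsOf (l : Bipartition) (j : Fin 2) : PartitionSeq := if j = 0 then l.1 else l.2

/-- Membership of a box in the Young diagram of a bipartition. -/
def MemY (l : Bipartition) (b : Box) : Prop := b.2.1 < (l.partsOf b.2.2).parts b.1

/-- The entry of the charge `σ` corresponding to component `j`. -/
def chargeOf (σ : ℤ × ℤ) (j : Fin 2) : ℤ := if j = 0 then σ.1 else σ.2

/-- The charged content `co^σ(b) = y - x + σ_j` of a box. -/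
def content (σ : ℤ × ℤ) (b : Box) : ℤ := (b.2.1 : ℤ) - (b.1 : ℤ) + chargeOf σ b.2.2

/-- `j(b) ∈ {1,2}`: the component of a box, numbered 1 or 2. -/
def jval (b : Box) : ℕ := (b.2.2 : ℕ) + 1

/-- The counting function of the Dunkl–Griffeth order. -/
def dgCount (l : Bipartition) (s : ℤ × ℤ) (d : ℕ) (α : ℝ) (j : ℕ) : ℕ :=
  Nat.card {b : Box // MemY l b ∧
    (α < (content s b : ℝ) - (jval b : ℝ) * (d : ℝ) / 2 ∨
      ((content s b : ℝ) - (jval b : ℝ) * (d : ℝ) / 2 = α ∧ jval b ≤ j))}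

/-- The Dunkl–Griffeth order `λ ⪯_s μ` (with respect to `d`). -/
def DGLE (l m : Bipartition) (s : ℤ × ℤ) (d : ℕ) : Prop :=
  ∀ (α : ℝ), ∀ j ∈ ({1, 2} : Set ℕ), dgCount l s d α j ≤ dgCount m s d α j

/-- A box of the extended Young diagram: rows are infinite to the left, so the column
coordinate is an integer.  `(x, y, j)` is the box in (0-indexed) row `x`, with integer
column coordinate `y` (`y = 0` is the first column), in component `j`. -/
abbrev ExtBox := ℕ × ℤ × Fin 2

/-- Membership in the extended Young diagram of a bipartition. -/
def MemExtY (l : Bipartition) (b : ExtBox) : Prop :=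
  b.2.1 < ((l.partsOf b.2.2).parts b.1 : ℤ)

/-- The charged content of an extended box. -/
def contentExt (σ : ℤ × ℤ) (b : ExtBox) : ℤ := b.2.1 - (b.1 : ℤ) + chargeOf σ b.2.2

/-- `b` is a removable box of the bipartition `l`. -/
def Removable (l : Bipartition) (b : Box) : Prop :=
  (l.partsOf b.2.2).parts b.1 = b.2.1 + 1 ∧ (l.partsOf b.2.2).parts (b.1 + 1) ≤ b.2.1

/-- `b` is an addable box of the bipartition `l`. -/
def Addable (l : Bipartition) (b : Box) : Prop :=
  (l.partsOf b.2.2).parts b.1 = b.2.1 ∧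
    (b.1 = 0 ∨ b.2.1 + 1 ≤ (l.partsOf b.2.2).parts (b.1 - 1))

/-- The order in which boxes are listed in the `i`-word: increasing charged content,
a component-2 box preceding a component-1 box of equal charged content. -/
def BoxLT (σ : ℤ × ℤ) (b b' : Box) : Prop :=
  content σ b < content σ b' ∨
    (content σ b = content σ b' ∧ b.2.2 = 1 ∧ b'.2.2 = 0)

/-- `L` is the list of boxes underlying the `i`-word of `(l, σ)` with respect to `d`:
it lists, in increasing order, exactly the addable and removable boxes of `l` whose
charged content is congruent to `i` modulo `d`. -/
def IsIWord (l : Bipartition) (σ : ℤ × ℤ) (d : ℕ) (i : ZMod d) (L : List Box) : Prop :=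
  L.Pairwise (BoxLT σ) ∧
    ∀ b : Box, b ∈ L ↔ ((Addable l b ∨ Removable l b) ∧ ((content σ b : ZMod d) = i))

/-- The sign of a box in the `i`-word: `true` (`+`) for addable, `false` (`−`) for
removable boxes. -/
def signOf (l : Bipartition) (b : Box) : Bool := if Addable l b then true else false

/-- One reduction step on words: delete an adjacent pair `−+`. -/
def RedStep (w w' : List Bool) : Prop :=
  ∃ u v : List Bool, w = u ++ false :: true :: v ∧ w' = u ++ v

/-- `ẽ_i l = 0`: the reduced `i`-word of `(l, σ)` contains no `−`, i.e. the `i`-word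
reduces to a word consisting only of `+`'s. -/
def AnnihilatedE (l : Bipartition) (σ : ℤ × ℤ) (d : ℕ) (i : ZMod d) : Prop :=
  ∃ L : List Box, IsIWord l σ d i L ∧
    ∃ a : ℕ, Relation.ReflTransGen RedStep (L.map (signOf l)) (List.replicate a true)

/-- `q` is obtained from the partition `p` by adding one box. -/
def PCovers (p q : PartitionSeq) : Prop :=
  ∃ x : ℕ, q.parts x = p.parts x + 1 ∧ ∀ y : ℕ, y ≠ x → q.parts y = p.parts y

/-- `m` is obtained from the bipartition `l` by adding one box to its Young diagram. -/
def BipCovers (l m : Bipartition) : Prop :=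
  (PCovers l.1 m.1 ∧ m.2 = l.2) ∨ (m.1 = l.1 ∧ PCovers l.2 m.2)

/-- `A(l) = Σ_μ μ`, the sum over all bipartitions obtained from `l` by adding one box,
as an element of the group of `ℤ`-valued functions on bipartitions. -/
def addB (l : Bipartition) : Bipartition → ℤ := fun m => if BipCovers l m then 1 else 0

/-- The projection `π_S` onto the span of the bipartitions lying in `S`. -/
def projS (S : Set Bipartition) (f : Bipartition → ℤ) : Bipartition → ℤ :=
  fun m => if m ∈ S then f m else 0

/-- The basis element of `ℤ[BP]` corresponding to a bipartition. -/
def deltaB (l : Bipartition) : Bipartition → ℤ := fun m => if m = l then 1 else 0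

/-- The bipartitions of `2n` labelling the principal-series unipotent characters in
the principal `Φ_{2n}`-block. -/
def PS (n : ℕ) : Set Bipartition :=
  {l | (∃ i j : ℕ, 0 < i ∧ i < n ∧ j ≤ n ∧
          l = bip (hook (n - i) j) (hook (n - j + 1) (i - 1))) ∨
       (∃ j : ℕ, j < 2 * n ∧ l = bip (hook (2 * n - j) j) 0) ∨
       (∃ i : ℕ, 0 < i ∧ i ≤ 2 * n ∧ l = bip 0 (hook (2 * n - i + 1) (i - 1)))}

/-- The bipartitions of `2n-2` labelling the `B₂`-series unipotent characters in the
principal `Φ_{2n}`-block: `2^i 1^{j-i-1} . (n-i-1)(n-j)` for `0 ≤ i < j ≤ n`. -/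
def LB2 (n : ℕ) : Set Bipartition :=
  {l | ∃ i j : ℕ, i < j ∧ j ≤ n ∧
        l = bip (Multiset.replicate i 2 + Multiset.replicate (j - i - 1) 1)
                {n - i - 1, n - j}}

/-- The bipartitions of `2n-6` labelling the `B₆`-series unipotent characters in the
principal `Φ_{2n}`-block: `(n-i-2)(n-j-1) . 2^{i-1} 1^{j-i-1}` for `0 < i < j < n`. -/
def LB6 (n : ℕ) : Set Bipartition :=
  {l | ∃ i j : ℕ, 0 < i ∧ i < j ∧ j < n ∧
        l = bip {n - i - 2, n - j - 1}
                (Multiset.replicate (i - 1) 2 + Multiset.replicate (j - i - 1) 1)}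

end

noncomputable section
namespace Stmt11Aux

lemma ofMul_zero_parts (k : ℕ) : (PartitionSeq.ofMul 0).parts k = 0 := by
  simp [PartitionSeq.ofMul]

lemma sort_replicate (m : ℕ) :
    Multiset.sort (Multiset.replicate m 2) (· ≤ ·) = List.replicate m 2 := by
  rw [← List.perm_replicate, ← Multiset.coe_eq_coe, Multiset.sort_eq, Multiset.coe_replicate]

lemma ofMul_replicate_parts (m k : ℕ) :
    (PartitionSeq.ofMul (Multiset.replicate m 2)).parts k = if k < m then 2 else 0 := by
  show (((Multiset.replicate m 2).sort (· ≤ ·)).reverse).getD k 0 = _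
  rw [sort_replicate, List.reverse_replicate]
  rcases lt_or_ge k m with h | h
  · rw [List.getD_eq_getElem _ 0 (by simpa using h), List.getElem_replicate, if_pos h]
  · rw [List.getD_eq_default _ _ (by simpa using h), if_neg (by omega)]

lemma partsOf_fst (M : Multiset ℕ) (k : ℕ) :
    ((bip 0 M).partsOf 0).parts k = 0 := ofMul_zero_parts k

lemma partsOf_snd (m : ℕ) (k : ℕ) :
    ((bip 0 (Multiset.replicate m 2)).partsOf 1).parts k = if k < m then 2 else 0 := by
  show (PartitionSeq.ofMul (Multiset.replicate m 2)).parts k = _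
  exact ofMul_replicate_parts m k

lemma add0 (M : Multiset ℕ) (x y : ℕ) :
    Addable (bip 0 M) (x, y, 0) ↔ x = 0 ∧ y = 0 := by
  simp only [Addable, partsOf_fst]
  omega

lemma rem0 (M : Multiset ℕ) (x y : ℕ) :
    ¬ Removable (bip 0 M) (x, y, 0) := by
  simp only [Removable, partsOf_fst]
  omega

lemma add1 (m x y : ℕ) :
    Addable (bip 0 (Multiset.replicate m 2)) (x, y, 1) ↔
      (x = m ∧ y = 0) ∨ (0 < m ∧ x = 0 ∧ y = 2) := by
  simp only [Addable, partsOf_snd]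
  split_ifs <;> omega

lemma rem1 (m x y : ℕ) :
    Removable (bip 0 (Multiset.replicate m 2)) (x, y, 1) ↔
      0 < m ∧ x = m - 1 ∧ y = 1 := by
  simp only [Removable, partsOf_snd]
  split_ifs <;> first | omega | (simp only [false_and, false_iff]; omega)

lemma fin2_cases (j : Fin 2) : j = 0 ∨ j = 1 := by revert j; decide

lemma addrem_iff (m : ℕ) (b : Box) :
    (Addable (bip 0 (Multiset.replicate m 2)) b ∨ Removable (bip 0 (Multiset.replicate m 2)) b) ↔
      (b = (0, 0, (0 : Fin 2)) ∨ b = (m, 0, (1 : Fin 2)) ∨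
        (0 < m ∧ b = (0, 2, (1 : Fin 2))) ∨ (0 < m ∧ b = (m - 1, 1, (1 : Fin 2)))) := by
  obtain ⟨x, y, j⟩ := b
  rcases fin2_cases j with rfl | rfl
  · simp only [add0, Prod.mk.injEq]
    have h := rem0 (Multiset.replicate m 2) x y
    constructor
    · rintro (⟨rfl, rfl⟩ | hr)
      · simp
      · exact absurd hr h
    · rintro (⟨rfl, rfl, _⟩ | ⟨_, _, hj⟩ | ⟨_, _, _, hj⟩ | ⟨_, _, _, hj⟩) <;>
        first | (left; exact ⟨rfl, rfl⟩) | exact absurd hj (by decide)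
  · simp only [add1, rem1, Prod.mk.injEq]
    constructor
    · rintro ((⟨rfl, rfl⟩ | ⟨hm, rfl, rfl⟩) | ⟨hm, rfl, rfl⟩)
      · right; left; exact ⟨rfl, rfl, trivial⟩
      · right; right; left; exact ⟨hm, rfl, rfl, trivial⟩
      · right; right; right; exact ⟨hm, rfl, rfl, trivial⟩
    · rintro (⟨_, _, hj⟩ | ⟨rfl, rfl, _⟩ | ⟨hm, rfl, rfl, _⟩ | ⟨hm, rfl, rfl, _⟩)
      · exact absurd hj (by decide)
      · left; left; exact ⟨rfl, rfl⟩
      · left; right; exact ⟨hm, rfl, rfl⟩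
      · right; exact ⟨hm, rfl, rfl⟩

lemma content_j0 (n : ℕ) (x y : ℕ) :
    content (2, (n : ℤ) - 3) (x, y, (0 : Fin 2)) = (y : ℤ) - x + 2 := by
  simp [content, chargeOf]

lemma content_j1 (n : ℕ) (x y : ℕ) :
    content (2, (n : ℤ) - 3) (x, y, (1 : Fin 2)) = (y : ℤ) - x + ((n : ℤ) - 3) := by
  simp [content, chargeOf]

lemma zmod_ne (n : ℕ) (a b : ℤ) (ha : 0 ≤ a) (hA : a < 2 * n) (hb : 0 ≤ b)
    (hB : b < 2 * n) (hab : a ≠ b) : ((a : ZMod (2 * n)) ≠ (b : ZMod (2 * n))) := by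
  intro h
  rw [ZMod.intCast_eq_intCast_iff, Int.ModEq,
    Int.emod_eq_of_lt ha (by push_cast; omega), Int.emod_eq_of_lt hb (by push_cast; omega)] at h
  exact hab h

lemma sign_A (m : ℕ) : signOf (bip 0 (Multiset.replicate m 2)) (0, 0, (0 : Fin 2)) = true := by
  rw [signOf, if_pos ((add0 _ 0 0).mpr ⟨rfl, rfl⟩)]

lemma sign_B (m : ℕ) : signOf (bip 0 (Multiset.replicate m 2)) (m, 0, (1 : Fin 2)) = true := by
  rw [signOf, if_pos ((add1 m m 0).mpr (Or.inl ⟨rfl, rfl⟩))]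

lemma sign_C (m : ℕ) (hm : 0 < m) :
    signOf (bip 0 (Multiset.replicate m 2)) (0, 2, (1 : Fin 2)) = true := by
  rw [signOf, if_pos ((add1 m 0 2).mpr (Or.inr ⟨hm, rfl, rfl⟩))]

lemma sign_R (m : ℕ) (hm : 0 < m) :
    signOf (bip 0 (Multiset.replicate m 2)) (m - 1, 1, (1 : Fin 2)) = false := by
  rw [signOf, if_neg]
  rw [add1]
  rintro (⟨h1, h2⟩ | ⟨_, h1, h2⟩) <;> omega

end Stmt11Aux
end

open Stmt11Aux

/-- With `d = 2n` and charge `s₂ = (2, n-3)`, every Kashiwara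
operator `ẽ_i` annihilates the bipartition `∅.2^{n-3}`. -/
theorem decomposition_numbers_stmt11 (n : ℕ) (hn : 3 ≤ n) (i : ZMod (2 * n)) :
    AnnihilatedE (bip 0 (Multiset.replicate (n - 3) 2)) (2, (n : ℤ) - 3) (2 * n) i := by
  have hcA : content (2, (n : ℤ) - 3) (0, 0, (0 : Fin 2)) = 2 := by
    rw [content_j0]; norm_num
  have hcB : content (2, (n : ℤ) - 3) (n - 3, 0, (1 : Fin 2)) = 0 := by
    rw [content_j1]; omega
  have hcC : content (2, (n : ℤ) - 3) (0, 2, (1 : Fin 2)) = (n : ℤ) - 1 := by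
    rw [content_j1]; omega
  have hcR : 4 ≤ n → content (2, (n : ℤ) - 3) (n - 3 - 1, 1, (1 : Fin 2)) = 2 := by
    intro h4; rw [content_j1]; omega
  by_cases h2 : ((2 : ℤ) : ZMod (2 * n)) = i
  · by_cases h4 : 4 ≤ n
    · -- i-word [R, A]
      refine ⟨[(n - 3 - 1, 1, (1 : Fin 2)), (0, 0, (0 : Fin 2))], ⟨?_, ?_⟩, 0, ?_⟩
      · refine List.pairwise_cons.mpr ⟨?_, List.pairwise_singleton _ _⟩
        intro b hb
        rw [List.mem_singleton] at hb; subst hb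
        exact Or.inr ⟨by rw [hcR h4, hcA], rfl, rfl⟩
      · intro b
        constructor
        · intro hb
          rcases List.mem_cons.mp hb with rfl | hb
          · exact ⟨Or.inr ((rem1 _ _ _).mpr ⟨by omega, rfl, rfl⟩), by rw [hcR h4]; exact h2⟩
          · rw [List.mem_singleton] at hb; subst hb
            exact ⟨Or.inl ((add0 _ _ _).mpr ⟨rfl, rfl⟩), by rw [hcA]; exact h2⟩
        · rintro ⟨har, hco⟩
          rcases (addrem_iff (n - 3) b).mp har with rfl | rfl | ⟨hm', rfl⟩ | ⟨hm', rfl⟩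
          · rw [hcA] at hco
            exact List.mem_cons.mpr (Or.inr (List.mem_singleton.mpr rfl))
          · rw [hcB] at hco
            exact absurd (hco.trans h2.symm)
              (zmod_ne n 0 2 le_rfl (by push_cast; omega) (by norm_num) (by push_cast; omega)
                (by norm_num))
          · rw [hcC] at hco
            exact absurd (hco.trans h2.symm)
              (zmod_ne n ((n : ℤ) - 1) 2 (by omega) (by push_cast; omega) (by norm_num)
                (by push_cast; omega) (by omega))
          · exact List.mem_cons_self
      · have hmap : List.map (signOf (bip 0 (Multiset.replicate (n - 3) 2)))
            [(n - 3 - 1, 1, (1 : Fin 2)), (0, 0, (0 : Fin 2))] = [false, true] := by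
          rw [List.map_cons, List.map_cons, List.map_nil, sign_R (n - 3) (by omega), sign_A]
        rw [hmap]
        exact Relation.ReflTransGen.single ⟨[], [], rfl, rfl⟩
    · -- n = 3 : i-word [A]
      refine ⟨[(0, 0, (0 : Fin 2))], ⟨List.pairwise_singleton _ _, ?_⟩, 1, ?_⟩
      · intro b
        constructor
        · intro hb
          rw [List.mem_singleton] at hb; subst hb
          exact ⟨Or.inl ((add0 _ _ _).mpr ⟨rfl, rfl⟩), by rw [hcA]; exact h2⟩
        · rintro ⟨har, hco⟩
          rcases (addrem_iff (n - 3) b).mp har with rfl | rfl | ⟨hm', rfl⟩ | ⟨hm', rfl⟩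
          · exact List.mem_singleton.mpr rfl
          · rw [hcB] at hco
            exact absurd (hco.trans h2.symm)
              (zmod_ne n 0 2 le_rfl (by push_cast; omega) (by norm_num) (by push_cast; omega)
                (by norm_num))
          · omega
          · omega
      · have hmap : List.map (signOf (bip 0 (Multiset.replicate (n - 3) 2)))
            [(0, 0, (0 : Fin 2))] = [true] := by rw [List.map_cons, List.map_nil, sign_A]
        rw [hmap]
        exact Relation.ReflTransGen.refl
  · by_cases h0 : ((0 : ℤ) : ZMod (2 * n)) = i
    · -- i-word [B]
      refine ⟨[(n - 3, 0, (1 : Fin 2))], ⟨List.pairwise_singleton _ _, ?_⟩, 1, ?_⟩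
      · intro b
        constructor
        · intro hb
          rw [List.mem_singleton] at hb; subst hb
          exact ⟨Or.inl ((add1 _ _ _).mpr (Or.inl ⟨rfl, rfl⟩)), by rw [hcB]; exact h0⟩
        · rintro ⟨har, hco⟩
          rcases (addrem_iff (n - 3) b).mp har with rfl | rfl | ⟨hm', rfl⟩ | ⟨hm', rfl⟩
          · rw [hcA] at hco; exact absurd hco h2
          · exact List.mem_singleton.mpr rfl
          · rw [hcC] at hco
            exact absurd (hco.trans h0.symm)
              (zmod_ne n ((n : ℤ) - 1) 0 (by omega) (by push_cast; omega) le_rfl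
                (by push_cast; omega) (by omega))
          · rw [hcR (by omega)] at hco; exact absurd hco h2
      · have hmap : List.map (signOf (bip 0 (Multiset.replicate (n - 3) 2)))
            [(n - 3, 0, (1 : Fin 2))] = [true] := by rw [List.map_cons, List.map_nil, sign_B]
        rw [hmap]
        exact Relation.ReflTransGen.refl
    · by_cases hN : (Int.cast ((n : ℤ) - 1) : ZMod (2 * n)) = i
      · -- i-word [C]; here necessarily 4 ≤ n
        have h4 : 4 ≤ n := by
          by_contra h
          have hn3 : n = 3 := by omega
          apply h2
          rw [← hN]
          subst hn3
          norm_num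
        refine ⟨[(0, 2, (1 : Fin 2))], ⟨List.pairwise_singleton _ _, ?_⟩, 1, ?_⟩
        · intro b
          constructor
          · intro hb
            rw [List.mem_singleton] at hb; subst hb
            exact ⟨Or.inl ((add1 _ _ _).mpr (Or.inr ⟨by omega, rfl, rfl⟩)),
              by rw [hcC]; exact hN⟩
          · rintro ⟨har, hco⟩
            rcases (addrem_iff (n - 3) b).mp har with rfl | rfl | ⟨hm', rfl⟩ | ⟨hm', rfl⟩
            · rw [hcA] at hco; exact absurd hco h2
            · rw [hcB] at hco; exact absurd hco h0
            · exact List.mem_singleton.mpr rfl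
            · rw [hcR (by omega)] at hco; exact absurd hco h2
        · have hmap : List.map (signOf (bip 0 (Multiset.replicate (n - 3) 2)))
              [(0, 2, (1 : Fin 2))] = [true] := by
            rw [List.map_cons, List.map_nil, sign_C (n - 3) (by omega)]
          rw [hmap]
          exact Relation.ReflTransGen.refl
      · -- empty i-word
        refine ⟨[], ⟨List.Pairwise.nil, ?_⟩, 0, Relation.ReflTransGen.refl⟩
        intro b
        simp only [List.not_mem_nil, false_iff]
        rintro ⟨har, hco⟩
        rcases (addrem_iff (n - 3) b).mp har with rfl | rfl | ⟨hm', rfl⟩ | ⟨hm', rfl⟩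
        · rw [hcA] at hco; exact absurd hco h2
        · rw [hcB] at hco; exact absurd hco h0
        · rw [hcC] at hco; exact absurd hco hN
        · rw [hcR (by omega)] at hco; exact absurd hco h2
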